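/- Let a, c ∈ ℝ with a ≠ c and let b = (a + c)/2. Let a', b', c' ∈ ℝ^m be distinct points, and let α ∈ [0, π] be the angle between the segments [a', b'] and [a', c'], i.e., cos α = ⟨b' − a', c' − a'⟩/(‖b' − a'‖·‖c' − a'‖). Let D be the distortion of the three-point map sending a, b, c to a', b', c' respectively. Then: if α ≤ π/4 then D ≥ 1/cos α, and if α > π/4 then D ≥ √2. In particular D ≥ min(1/cos α, √2). -/
import Mathlib


open scoped RealInnerProductSpace

private lemma distortion_arith (L u v w s D : ℝ) (hL : 0 < L)
    (hu1 : L ≤ u) (hu2 : u ≤ L * D)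
    (hw1 : L ≤ w) (hw2 : w ≤ L * D)
    (hv1 : 2 * L ≤ v) (hv2 : v ≤ 2 * L * D)
    (hlaw : w ^ 2 = u ^ 2 + v ^ 2 - 2 * (u * v * s)) :
    (Real.sqrt 2 / 2 ≤ s → 1 / s ≤ D) ∧ (s ≤ Real.sqrt 2 / 2 → Real.sqrt 2 ≤ D) := by
  have hD1 : 1 ≤ D := by nlinarith
  have hsq2 : Real.sqrt 2 ^ 2 = 2 := Real.sq_sqrt (by norm_num)
  have hsqn : 0 ≤ Real.sqrt 2 := Real.sqrt_nonneg 2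
  have hsq1 : 1 ≤ Real.sqrt 2 := by nlinarith
  have hwsq : w ^ 2 ≤ L ^ 2 * D ^ 2 := by nlinarith
  constructor
  · intro hs1
    have hs0 : 0 < s := by nlinarith
    have hDs : 1 ≤ D * s := by
      by_contra hcon
      push_neg at hcon
      have hus : u * s < L := by
        calc u * s ≤ (L * D) * s := by nlinarith
          _ = L * (D * s) := by ring
          _ < L * 1 := by nlinarith
          _ = L := by ring
      have hs2 : Real.sqrt 2 ≤ 2 * s := by nlinarith
      have hDle : D < 2 * s := by nlinarith
      have hule : u ≤ 2 * L * s := by nlinarith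
      have hprod1 : 0 ≤ (v - 2 * L) * (v + 2 * L - 2 * (u * s)) := by
        apply mul_nonneg <;> linarith
      have hprod2 : 0 ≤ (L * D - u) * (4 * L * s - u - L * D) := by
        apply mul_nonneg
        · linarith
        · nlinarith
      have hfin : 0 < L ^ 2 * (1 - D * s) := by
        apply mul_pos (by positivity); linarith
      nlinarith [hprod1, hprod2, hwsq, hlaw, hfin]
    rw [div_le_iff₀ hs0]
    linarith
  · intro hs1
    have huv : 0 < u * v := mul_pos (lt_of_lt_of_le hL hu1) (by linarith)
    have hkey : 2 * (u * v * s) ≤ Real.sqrt 2 * (u * v) := by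
      have h2s : 2 * s ≤ Real.sqrt 2 := by linarith
      calc 2 * (u * v * s) = (u * v) * (2 * s) := by ring
        _ ≤ (u * v) * Real.sqrt 2 := mul_le_mul_of_nonneg_left h2s huv.le
        _ = Real.sqrt 2 * (u * v) := by ring
    have hexp : (2 * u - Real.sqrt 2 * v) ^ 2
        = 4 * u ^ 2 - 4 * (Real.sqrt 2 * (u * v)) + 2 * v ^ 2 := by
      linear_combination v ^ 2 * hsq2
    have hvsq : (2 * L) ^ 2 ≤ v ^ 2 := by
      apply pow_le_pow_left₀ (by positivity) hv1
    have hwlb : 2 * L ^ 2 ≤ w ^ 2 := by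
      linarith [sq_nonneg (2 * u - Real.sqrt 2 * v), hexp, hkey, hlaw, hvsq]
    have hL2 : 0 < L ^ 2 := by positivity
    have hD2 : 2 ≤ D ^ 2 := by
      have hh : L ^ 2 * 2 ≤ L ^ 2 * D ^ 2 := by linarith [hwlb, hwsq]
      exact le_of_mul_le_mul_left hh hL2
    calc Real.sqrt 2 ≤ Real.sqrt (D ^ 2) := Real.sqrt_le_sqrt hD2
      _ = D := Real.sqrt_sq (by linarith)

/-- `g` restricted to `A ⊆ ℝ` (mapping into `ℝᵐ`) has distortion at most `D`. -/
def HasDistortionAtMost {m : ℕ} (A : Set ℝ) (g : ℝ → EuclideanSpace ℝ (Fin m)) (D : ℝ) : Prop :=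
  ∃ lam > (0 : ℝ), ∀ x ∈ A, ∀ y ∈ A,
    lam * |x - y| ≤ ‖g x - g y‖ ∧ ‖g x - g y‖ ≤ lam * D * |x - y|

/-- **The angle claim.** Let `a ≠ c` be reals, `b = (a+c)/2`, and let `a', b', c' ∈ ℝᵐ` be
distinct. Let `α ∈ [0, π]` be the angle at `a'` between the segments `[a', b']` and `[a', c']`.
If `D` bounds the distortion of the three-point map `a ↦ a'`, `b ↦ b'`, `c ↦ c'`, then
`D ≥ 1/cos α` when `α ≤ π/4`, and `D ≥ √2` when `α > π/4`; in particular
`D ≥ min (1/cos α) √2`. -/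
theorem angle_distortion_claim {m : ℕ} (a c : ℝ) (hac : a ≠ c) (b : ℝ) (hb : b = (a + c) / 2)
    (a' b' c' : EuclideanSpace ℝ (Fin m))
    (hab' : a' ≠ b') (hac' : a' ≠ c') (hbc' : b' ≠ c')
    (α : ℝ) (hα0 : 0 ≤ α) (hαπ : α ≤ Real.pi)
    (hcos : Real.cos α = ⟪b' - a', c' - a'⟫ / (‖b' - a'‖ * ‖c' - a'‖))
    (g : ℝ → EuclideanSpace ℝ (Fin m)) (hga : g a = a') (hgb : g b = b') (hgc : g c = c')
    (D : ℝ) (hD : HasDistortionAtMost {a, b, c} g D) :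
    (α ≤ Real.pi / 4 → 1 / Real.cos α ≤ D) ∧
    (Real.pi / 4 < α → Real.sqrt 2 ≤ D) ∧
    min (1 / Real.cos α) (Real.sqrt 2) ≤ D := by
  obtain ⟨lam, hlam, h⟩ := hD
  have hma : a ∈ ({a, b, c} : Set ℝ) := by simp
  have hmb : b ∈ ({a, b, c} : Set ℝ) := by simp
  have hmc : c ∈ ({a, b, c} : Set ℝ) := by simp
  obtain ⟨hab1, hab2⟩ := h a hma b hmb
  obtain ⟨hbc1, hbc2⟩ := h b hmb c hmc
  obtain ⟨hac1, hac2⟩ := h a hma c hmc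
  rw [hga, hgb] at hab1 hab2
  rw [hgb, hgc] at hbc1 hbc2
  rw [hga, hgc] at hac1 hac2
  set u := ‖b' - a'‖ with hu
  set v := ‖c' - a'‖ with hv
  set w := ‖c' - b'‖ with hw
  set s := Real.cos α with hs
  set e := |a - c| with he
  have he0 : 0 < e := abs_pos.mpr (sub_ne_zero.mpr hac)
  have habd : |a - b| = e / 2 := by
    have h1 : a - b = (a - c) / 2 := by rw [hb]; ring
    rw [h1, abs_div, abs_two, he]
  have hbcd : |b - c| = e / 2 := by
    have h1 : b - c = (a - c) / 2 := by rw [hb]; ring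
    rw [h1, abs_div, abs_two, he]
  have hnab : ‖a' - b'‖ = u := norm_sub_rev a' b'
  have hnbc : ‖b' - c'‖ = w := norm_sub_rev b' c'
  have hnac : ‖a' - c'‖ = v := norm_sub_rev a' c'
  rw [hnab, habd] at hab1 hab2
  rw [hnbc, hbcd] at hbc1 hbc2
  rw [hnac] at hac1 hac2
  have hu0 : u ≠ 0 := norm_ne_zero_iff.mpr (sub_ne_zero.mpr (Ne.symm hab'))
  have hv0 : v ≠ 0 := norm_ne_zero_iff.mpr (sub_ne_zero.mpr (Ne.symm hac'))
  have hip : ⟪b' - a', c' - a'⟫ = u * v * s := by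
    rw [hcos]
    field_simp
  have hw2 : w ^ 2 = u ^ 2 + v ^ 2 - 2 * (u * v * s) := by
    have key : (c' - a') - (b' - a') = c' - b' := by abel
    have h1 : ‖(c' - a') - (b' - a')‖ ^ 2
        = ‖c' - a'‖ ^ 2 - 2 * ⟪c' - a', b' - a'⟫ + ‖b' - a'‖ ^ 2 :=
      norm_sub_sq_real (c' - a') (b' - a')
    rw [key] at h1
    rw [real_inner_comm, hip] at h1
    rw [hw, hu, hv] at *
    linarith [h1]
  set L := lam * (e / 2) with hLdef
  have hL : 0 < L := by positivity
  obtain ⟨part1, part2⟩ := distortion_arith L u v w s D hL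
    hab1 (by rw [hLdef]; linarith [hab2]) hbc1 (by rw [hLdef]; linarith [hbc2])
    (by rw [hLdef]; linarith [hac1]) (by rw [hLdef]; linarith [hac2]) hw2
  have hcos4 : Real.cos (Real.pi / 4) = Real.sqrt 2 / 2 := Real.cos_pi_div_four
  have case1 : α ≤ Real.pi / 4 → 1 / s ≤ D := by
    intro hα
    apply part1
    rw [← hcos4, hs]
    exact Real.cos_le_cos_of_nonneg_of_le_pi hα0 (by linarith [Real.pi_pos]) hα
  have case2 : Real.pi / 4 < α → Real.sqrt 2 ≤ D := by
    intro hα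
    apply part2
    rw [← hcos4, hs]
    exact le_of_lt (Real.cos_lt_cos_of_nonneg_of_le_pi (by positivity) hαπ hα)
  refine ⟨case1, case2, ?_⟩
  rcases le_or_gt α (Real.pi / 4) with hα | hα
  · exact le_trans (min_le_left _ _) (case1 hα)
  · exact le_trans (min_le_right _ _) (case2 hα)
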